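/- Let K be a field whose characteristic is none of 2, 3, 5, and let s ∈ K satisfy s² = 5. In GL(3, K), the subgroup generated by the matrices ρ_v(x, y) and ρ_f(x, y) with x = 1/2 and y = −s/3 (the icosahedron specialized to K; both matrices are invertible) is isomorphic to the alternating group alternatingGroup (Fin 5). -/
import Mathlib

open Matrix

/-- Grothendieck's universal rotation `ρ_v` about a vertex, with `x = cos θ`, `y = cos γ`. -/
def rhoV {R : Type*} [CommRing R] (x y : R) : Matrix (Fin 3) (Fin 3) R :=
  !![1, 1 - x, (1 - x) * (1 - y); 0, -1, -1 + y; 0, 1 + x, -1 + (1 + x) * (1 - y)]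

/-- Grothendieck's universal rotation `ρ_f` about a face, with `x = cos θ`, `y = cos γ`. -/
def rhoF {R : Type*} [CommRing R] (x y : R) : Matrix (Fin 3) (Fin 3) R :=
  !![-1, -1 + x, 0; 2, 1 - 2 * x, 0; 0, 1 + x, 1]

namespace Icosa

set_option maxHeartbeats 2000000 in
def mData : List (List Int) := [
  [],
  [],
  [],
  [],
  [],
  [],
  [],
  [-12, 0, 0, 0, 0, 0, 0, 0, -12, 0, -12, -4, 0, 0, 0, 0, 12, 0],
  [0, 0, 0, 0, 2, 2, -24, 0, -18, -6, -16, -8, 36, 0, 36, 0, 18, 6],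
  [6, 6, 6, 6, 8, 4, 0, 0, -6, -6, -12, -4, 18, -18, 0, 0, 0, 0],
  [],
  [0, 0, -3, -3, -6, -2, -12, -12, -6, -6, -4, -4, 36, 0, 9, 9, 6, 6],
  [],
  [-12, 0, -9, -3, -8, -4, 24, 0, 18, 6, 12, 4, 0, 0, 9, -9, 0, 0],
  [0, 0, -6, 0, -6, -2, 24, 0, 12, 0, 12, 4, -36, 0, -18, 0, -6, -6],
  [],
  [6, 6, 9, 3, 6, 2, -12, -12, -6, -6, -12, -4, -18, 18, -9, 9, 6, 6],
  [-6, -6, -3, -3, -6, -2, 0, 0, -12, 0, 0, 0, -18, 18, 9, 9, 6, 6],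
  [],
  [0, 0, -6, 0, 0, 0, 12, 12, 18, 6, 12, 4, -36, 0, -18, 0, -12, 0],
  [],
  [12, 0, 6, 0, 6, 2, -24, 0, 0, 0, 0, 0, 0, 0, -18, 0, -6, -6],
  [-6, -6, -3, -3, -2, -2, 12, 12, 12, 12, 16, 8, 18, -18, -9, -9, -18, -6],
  [12, 0, 9, 3, 6, 2, 0, 0, 0, 0, 4, 4, 0, 0, 9, -9, -6, -6],
  [],
  [],
  [],
  [0, 0, -3, -3, -2, -2, 24, 0, 18, 6, 16, 8, -36, 0, -9, -9, -18, -6],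
  [-6, -6, -9, -3, -8, -4, 0, 0, 12, 0, 12, 4, -18, 18, -9, 9, 0, 0],
  [12, 0, 6, 0, 0, 0, 0, 0, 6, 6, 12, 4, 0, 0, -18, 0, -12, 0],
  [],
  [],
  [],
  [],
  [],
  [0, 0, 3, 3, 2, 2, 12, 12, 6, 6, 12, 4, -36, 0, -9, -9, -18, -6],
  [],
  [],
  [-12, 0, -6, 0, 0, 0, 0, 0, 12, 0, 0, 0, 0, 0, -18, 0, -12, 0],
  [6, 6, 9, 3, 8, 4, -12, -12, -18, -6, -12, -4, -18, 18, -9, 9, 0, 0],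
  [-6, -6, -9, -3, -8, -4, 12, 12, 6, 6, 4, 4, 18, -18, 9, -9, 0, 0],
  [],
  [12, 0, 6, 0, 0, 0, -24, 0, -18, -6, -12, -4, 0, 0, 18, 0, 12, 0],
  [],
  [0, 0, -3, -3, -2, -2, -24, 0, -12, 0, -12, -4, 36, 0, 9, 9, 18, 6],
  [-12, 0, -6, 0, 0, 0, 24, 0, 0, 0, 0, 0, 0, 0, 18, 0, 12, 0],
  [],
  [6, 6, 9, 3, 8, 4, 0, 0, 0, 0, -4, -4, 18, -18, 9, -9, 0, 0],
  [0, 0, 3, 3, 2, 2, -12, -12, -12, -12, -16, -8, 36, 0, 9, 9, 18, 6],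
  [],
  [],
  [0, 0, 3, 3, 6, 2, -24, 0, -18, -6, -12, -4, 36, 0, 9, 9, 6, 6],
  [],
  [0, 0, 6, 0, 6, 2, 12, 12, 6, 6, 4, 4, -36, 0, -18, 0, -6, -6],
  [12, 0, 9, 3, 8, 4, -24, 0, -12, 0, -12, -4, 0, 0, 9, -9, 0, 0],
  [12, 0, 0, 0, 0, 0, 0, 0, 12, 0, 0, 0, 0, 0, 0, 0, 12, 0],
  [],
  [],
  [-6, -6, -6, -6, -8, -4, 12, 12, 6, 6, 12, 4, 18, -18, 0, 0, 0, 0],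
  [0, 0, 0, 0, -2, -2, -12, -12, -18, -6, -12, -4, 36, 0, 36, 0, 18, 6],
  [],
  [],
  [],
  [],
  [],
  [6, 6, 3, 3, 2, 2, 0, 0, 12, 0, 12, 4, 18, -18, -9, -9, -18, -6],
  [-12, 0, -6, 0, -6, -2, 24, 0, 18, 6, 16, 8, 0, 0, -18, 0, -6, -6],
  [],
  [],
  [-12, 0, -9, -3, -6, -2, 0, 0, 6, 6, 12, 4, 0, 0, 9, -9, -6, -6],
  [6, 6, 3, 3, 6, 2, -12, -12, -12, -12, -16, -8, -18, 18, 9, 9, 6, 6],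
  [-6, -6, -9, -3, -6, -2, 0, 0, 0, 0, -4, -4, -18, 18, -9, 9, 6, 6],
  [],
  [0, 0, 6, 0, 0, 0, 24, 0, 0, 0, 0, 0, -36, 0, -18, 0, -12, 0],
  [],
  [],
  [6, 6, 9, 3, 6, 2, 0, 0, -12, 0, 0, 0, 18, -18, 9, -9, -6, -6],
  [0, 0, -6, 0, 0, 0, -12, -12, -6, -6, -12, -4, 36, 0, 18, 0, 12, 0],
  [],
  [-6, -6, -3, -3, -6, -2, 12, 12, 18, 6, 12, 4, 18, -18, -9, -9, -6, -6],
  [0, 0, 0, 0, 2, 2, 24, 0, 18, 6, 12, 4, -36, 0, -36, 0, -18, -6],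
  [],
  [6, 6, 6, 6, 8, 4, -12, -12, -6, -6, -4, -4, -18, 18, 0, 0, 0, 0],
  [],
  [-12, 0, 0, 0, 0, 0, 24, 0, 12, 0, 12, 4, 0, 0, 0, 0, -12, 0],
  [12, 0, 9, 3, 6, 2, -24, 0, -18, -6, -16, -8, 0, 0, -9, 9, 6, 6],
  [12, 0, 6, 0, 6, 2, 0, 0, -12, 0, -12, -4, 0, 0, 18, 0, 6, 6],
  [],
  [],
  [-6, -6, -3, -3, -2, -2, 0, 0, -6, -6, -12, -4, -18, 18, 9, 9, 18, 6],
  [],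
  [],
  [],
  [],
  [],
  [-12, 0, -9, -3, -8, -4, 0, 0, 0, 0, 4, 4, 0, 0, -9, 9, 0, 0],
  [0, 0, -3, -3, -6, -2, 12, 12, 12, 12, 16, 8, -36, 0, -9, -9, -6, -6],
  [0, 0, -6, 0, -6, -2, -24, 0, 0, 0, 0, 0, 36, 0, 18, 0, 6, 6],
  [],
  [],
  [],
  [-12, 0, -6, 0, -6, -2, 0, 0, -6, -6, -4, -4, 0, 0, 18, 0, 6, 6],
  [-12, 0, -9, -3, -6, -2, 24, 0, 12, 0, 0, 0, 0, 0, -9, 9, 6, 6],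
  [6, 6, 3, 3, 2, 2, -12, -12, -18, -6, -16, -8, -18, 18, 9, 9, 18, 6],
  [],
  [-6, -6, -6, -6, -8, -4, 0, 0, 6, 6, 4, 4, -18, 18, 0, 0, 0, 0],
  [],
  [0, 0, 0, 0, -2, -2, 12, 12, 18, 6, 16, 8, -36, 0, -36, 0, -18, -6],
  [12, 0, 0, 0, 0, 0, -24, 0, -12, 0, 0, 0, 0, 0, 0, 0, -12, 0],
  [],
  [0, 0, 6, 0, 0, 0, -24, 0, -12, 0, 0, 0, 36, 0, 18, 0, 12, 0],
  [-6, -6, -9, -3, -6, -2, 12, 12, 18, 6, 16, 8, 18, -18, 9, -9, -6, -6],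
  [],
  [6, 6, 3, 3, 6, 2, 0, 0, 6, 6, 4, 4, 18, -18, -9, -9, -6, -6],
  [],
  [0, 0, 6, 0, 6, 2, -12, -12, -18, -6, -16, -8, 36, 0, 18, 0, 6, 6],
  [0, 0, 3, 3, 6, 2, 24, 0, 12, 0, 0, 0, -36, 0, -9, -9, -6, -6],
  [12, 0, 9, 3, 8, 4, 0, 0, -6, -6, -4, -4, 0, 0, -9, 9, 0, 0],
  [],
  [],
  [],
  [],
  [],
  [],
  []]

def mIdx (g : Equiv.Perm (Fin 5)) : ℕ := (g 0).val + 5 * (g 1).val + 25 * (g 2).val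

def m (g : Equiv.Perm (Fin 5)) : Matrix (Fin 3) (Fin 3) (Zsqrtd 5) :=
  Matrix.of fun i j =>
    let l := mData.getD (mIdx g) []
    ⟨l.getD (6 * i.val + 2 * j.val) 0, l.getD (6 * i.val + 2 * j.val + 1) 0⟩

def sig : Equiv.Perm (Fin 5) := c[0, 1, 2, 3, 4]
def tau : Equiv.Perm (Fin 5) := c[(1 : Fin 5), 4, 2]

instance : DecidablePred (· ∈ alternatingGroup (Fin 5)) :=
  fun _ => decidable_of_iff _ (Equiv.Perm.mem_alternatingGroup).symm

abbrev A5 := alternatingGroup (Fin 5)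

def sighat : A5 := ⟨sig, by decide⟩
def tauhat : A5 := ⟨tau, by decide⟩

set_option maxHeartbeats 8000000 in
lemma mult_sig : ∀ g : A5, m g.val * m sig = (12 : Zsqrtd 5) • m (g.val * sig) := by decide

set_option maxHeartbeats 8000000 in
lemma mult_tau : ∀ g : A5, m g.val * m tau = (12 : Zsqrtd 5) • m (g.val * tau) := by decide

set_option maxHeartbeats 8000000 in
set_option maxRecDepth 40000 in
lemma A5ball_eq : (fun S : Finset A5 =>
    S ∪ S.image (· * sighat) ∪ S.image (· * tauhat))^[10] {1} = Finset.univ := by decide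

lemma m_one : m 1 = (12 : Zsqrtd 5) • 1 := by decide

lemma m_sig : m sig = !![⟨12,0⟩, ⟨6,0⟩, ⟨6,2⟩; ⟨0,0⟩, ⟨-12,0⟩, ⟨-12,-4⟩; ⟨0,0⟩, ⟨18,0⟩, ⟨6,6⟩] := by decide

lemma m_tau : m tau = !![⟨-12,0⟩, ⟨-6,0⟩, ⟨0,0⟩; ⟨24,0⟩, ⟨0,0⟩, ⟨0,0⟩; ⟨0,0⟩, ⟨18,0⟩, ⟨12,0⟩] := by decide

/-- Generic "ball" induction: any predicate preserved by right multiplication by the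
generators and true at `1` holds on the iterated ball. -/
lemma ball_pred {G : Type*} [Group G] [DecidableEq G] (a b : G) (p : G → Prop)
    (h1 : p 1) (ha : ∀ y, p y → p (y * a)) (hb : ∀ y, p y → p (y * b)) :
    ∀ n, ∀ x ∈ (fun S : Finset G => S ∪ S.image (· * a) ∪ S.image (· * b))^[n]
      ({1} : Finset G), p x := by
  intro n
  induction n with
  | zero =>
    intro x hx
    simp only [Function.iterate_zero, id_eq, Finset.mem_singleton] at hx
    subst hx; exact h1
  | succ k ih =>
    intro x hx
    rw [Function.iterate_succ_apply'] at hx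
    simp only [Finset.mem_union, Finset.mem_image] at hx
    rcases hx with (hx | ⟨y, hy, rfl⟩) | ⟨y, hy, rfl⟩
    · exact ih x hx
    · exact ha y (ih y hy)
    · exact hb y (ih y hy)

lemma A5_pred (p : A5 → Prop) (h1 : p 1) (ha : ∀ y, p y → p (y * sighat))
    (hb : ∀ y, p y → p (y * tauhat)) : ∀ x, p x := fun x =>
  ball_pred sighat tauhat p h1 ha hb 10 x (by rw [A5ball_eq]; exact Finset.mem_univ x)

section K

/-- The ring hom `ℤ√5 →+* K` sending `√5` to a chosen square root `s`. -/
def zsqrtdHom {K : Type*} [CommRing K] (s : K) (hs : s * s = 5) : Zsqrtd 5 →+* K where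
  toFun z := (z.re : K) + (z.im : K) * s
  map_one' := by simp
  map_zero' := by simp
  map_add' a b := by
    simp only [Zsqrtd.re_add, Zsqrtd.im_add]
    push_cast
    ring
  map_mul' a b := by
    simp only [Zsqrtd.re_mul, Zsqrtd.im_mul]
    push_cast
    linear_combination (-(a.im : K)) * (b.im : K) * hs

variable {K : Type*} [Field K] (f : Zsqrtd 5 →+* K)

/-- The projective-rescaled representation matrix over `K`. -/
def psim (g : Equiv.Perm (Fin 5)) : Matrix (Fin 3) (Fin 3) K := (12 : K)⁻¹ • (m g).map f

variable (h12 : (12 : K) ≠ 0)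

lemma map_smul12 (Q : Matrix (Fin 3) (Fin 3) (Zsqrtd 5)) :
    ((12 : Zsqrtd 5) • Q).map f = (12 : K) • Q.map f := by
  ext i j
  simp only [Matrix.map_apply, Matrix.smul_apply, smul_eq_mul, _root_.map_mul, map_ofNat]

include h12

lemma psim_one : psim f 1 = 1 := by
  unfold psim
  rw [m_one, map_smul12, Matrix.map_one f (map_zero f) (map_one f), smul_smul,
    inv_mul_cancel₀ h12, one_smul]

lemma psim_key {g a : Equiv.Perm (Fin 5)} (h : m g * m a = (12 : Zsqrtd 5) • m (g * a)) :
    psim f (g * a) = psim f g * psim f a := by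
  unfold psim
  rw [Matrix.smul_mul, Matrix.mul_smul, ← Matrix.map_mul, h, map_smul12, smul_smul, smul_smul]
  congr 1
  field_simp

lemma psim_mul : ∀ g h : A5, psim f (g.val * h.val) = psim f g.val * psim f h.val := by
  have key := fun {g a} h => psim_key f h12 (g := g) (a := a) h
  intro g h
  revert g
  refine A5_pred (fun h => ∀ g : A5, psim f (g.val * h.val) = psim f g.val * psim f h.val)
    ?_ ?_ ?_ h
  · intro g
    show psim f (g.val * 1) = psim f g.val * psim f (1 : Equiv.Perm (Fin 5))
    rw [mul_one, psim_one f h12, mul_one]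
  · intro y hy g
    show psim f (g.val * (y.val * sig)) = psim f g.val * psim f (y.val * sig)
    rw [← mul_assoc]
    calc psim f (g.val * y.val * sig) = psim f (g.val * y.val) * psim f sig :=
          key (mult_sig (g * y))
      _ = psim f g.val * psim f y.val * psim f sig := by rw [hy g]
      _ = psim f g.val * (psim f y.val * psim f sig) := mul_assoc _ _ _
      _ = psim f g.val * psim f (y.val * sig) := by rw [key (mult_sig y)]
  · intro y hy g
    show psim f (g.val * (y.val * tau)) = psim f g.val * psim f (y.val * tau)
    rw [← mul_assoc]
    calc psim f (g.val * y.val * tau) = psim f (g.val * y.val) * psim f tau :=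
          key (mult_tau (g * y))
      _ = psim f g.val * psim f y.val * psim f tau := by rw [hy g]
      _ = psim f g.val * (psim f y.val * psim f tau) := mul_assoc _ _ _
      _ = psim f g.val * psim f (y.val * tau) := by rw [key (mult_tau y)]

/-- The representation `A₅ →* GL(3, K)`. -/
def psi : A5 →* GL (Fin 3) K where
  toFun g := ⟨psim f g.val, psim f (g⁻¹).val,
    by
      rw [← psim_mul f h12 g g⁻¹,
        show g.val * (g⁻¹).val = 1 from by rw [← Subgroup.coe_mul, mul_inv_cancel,
          Subgroup.coe_one]]
      exact psim_one f h12,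
    by
      rw [← psim_mul f h12 g⁻¹ g,
        show (g⁻¹).val * g.val = 1 from by rw [← Subgroup.coe_mul, inv_mul_cancel,
          Subgroup.coe_one]]
      exact psim_one f h12⟩
  map_one' := Units.ext (psim_one f h12)
  map_mul' g h := Units.ext (psim_mul f h12 g h)

lemma psi_mem_closure (H : Subgroup (GL (Fin 3) K))
    (hA : psi f h12 sighat ∈ H) (hB : psi f h12 tauhat ∈ H) :
    ∀ g : A5, psi f h12 g ∈ H := by
  refine A5_pred (fun g => psi f h12 g ∈ H) ?_ ?_ ?_
  · show psi f h12 1 ∈ H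
    rw [_root_.map_one]; exact one_mem H
  · intro y hy
    show psi f h12 (y * sighat) ∈ H
    rw [_root_.map_mul]; exact mul_mem hy hA
  · intro y hy
    show psi f h12 (y * tauhat) ∈ H
    rw [_root_.map_mul]; exact mul_mem hy hB

end K

end Icosa

theorem icosahedron_specialization (K : Type*) [Field K]
    (h2 : ringChar K ≠ 2) (h3 : ringChar K ≠ 3) (h5 : ringChar K ≠ 5)
    (s : K) (hs : s ^ 2 = 5)
    (A B : GL (Fin 3) K)
    (hA : (A : Matrix (Fin 3) (Fin 3) K) = rhoV (1 / 2) (-s / 3))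
    (hB : (B : Matrix (Fin 3) (Fin 3) K) = rhoF (1 / 2) (-s / 3)) :
    Nonempty (Subgroup.closure {A, B} ≃* alternatingGroup (Fin 5)) := by
  classical
  -- characteristic facts
  have hchar1 : ringChar K ≠ 1 := by
    intro h1
    have : ((1 : ℕ) : K) = 0 :=
      (CharP.cast_eq_zero_iff K (ringChar K) 1).mpr (by rw [h1])
    simp at this
  have h2' : (2 : K) ≠ 0 := by
    intro h
    have hd : ringChar K ∣ 2 :=
      (CharP.cast_eq_zero_iff K (ringChar K) 2).mp (by exact_mod_cast h)
    rcases (Nat.dvd_prime Nat.prime_two).mp hd with h1 | h1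
    · exact hchar1 h1
    · exact h2 h1
  have h3' : (3 : K) ≠ 0 := by
    intro h
    have hd : ringChar K ∣ 3 :=
      (CharP.cast_eq_zero_iff K (ringChar K) 3).mp (by exact_mod_cast h)
    rcases (Nat.dvd_prime Nat.prime_three).mp hd with h1 | h1
    · exact hchar1 h1
    · exact h3 h1
  have h12 : (12 : K) ≠ 0 := by
    have : (12 : K) = 2 * 2 * 3 := by norm_num
    rw [this]
    exact mul_ne_zero (mul_ne_zero h2' h2') h3'
  -- the ring hom from ℤ√5 to K
  have hs' : s * s = ((5 : ℤ) : K) := by push_cast; rw [← sq]; exact hs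
  have hs5 : s * s = 5 := by rw [← sq]; exact hs
  set f : Zsqrtd 5 →+* K := Icosa.zsqrtdHom s hs5 with hf
  have hfval : ∀ a b : ℤ, f ⟨a, b⟩ = (a : K) + (b : K) * s := fun a b => rfl
  set ψ : Icosa.A5 →* GL (Fin 3) K := Icosa.psi f h12 with hψdef
  have hψσ : ψ Icosa.sighat = A := by
    apply Units.ext
    show Icosa.psim f Icosa.sig = _
    rw [hA]
    unfold Icosa.psim
    rw [Icosa.m_sig]
    ext i j
    fin_cases i <;> fin_cases j <;>
      simp [Matrix.map_apply, hfval, rhoV, Matrix.vecHead, Matrix.vecTail] <;>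
      field_simp <;> ring
  have hψτ : ψ Icosa.tauhat = B := by
    apply Units.ext
    show Icosa.psim f Icosa.tau = _
    rw [hB]
    unfold Icosa.psim
    rw [Icosa.m_tau]
    ext i j
    fin_cases i <;> fin_cases j <;>
      simp [Matrix.map_apply, hfval, rhoF, Matrix.vecHead, Matrix.vecTail] <;>
      field_simp <;> ring
  -- A ≠ 1
  have hA1 : A ≠ 1 := by
    intro h
    apply h2'
    have hu : (A : Matrix (Fin 3) (Fin 3) K) = 1 := by rw [h]; rfl
    rw [hA] at hu
    have he := congrFun (congrFun hu 1) 1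
    simp [rhoV, Matrix.one_apply] at he
    linear_combination -he
  -- ψ is injective
  have hinj : Function.Injective ψ := by
    rw [← MonoidHom.ker_eq_bot_iff]
    rcases IsSimpleGroup.eq_bot_or_eq_top_of_normal ψ.ker inferInstance with h | h
    · exact h
    · exfalso
      apply hA1
      rw [← hψσ]
      have : Icosa.sighat ∈ ψ.ker := by rw [h]; trivial
      exact this
  -- range of ψ equals the closure
  have hrange : ψ.range = Subgroup.closure {A, B} := by
    apply le_antisymm
    · rintro x ⟨g, rfl⟩
      have hAc : ψ Icosa.sighat ∈ Subgroup.closure {A, B} := by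
        rw [hψσ]; exact Subgroup.subset_closure (Set.mem_insert _ _)
      have hBc : ψ Icosa.tauhat ∈ Subgroup.closure {A, B} := by
        rw [hψτ]; exact Subgroup.subset_closure (Set.mem_insert_iff.mpr (Or.inr rfl))
      exact Icosa.psi_mem_closure f h12 _ hAc hBc g
    · rw [Subgroup.closure_le]
      rintro x (rfl | rfl)
      · exact ⟨Icosa.sighat, hψσ⟩
      · exact ⟨Icosa.tauhat, hψτ⟩
  exact ⟨(MulEquiv.subgroupCongr hrange.symm).trans (MonoidHom.ofInjective hinj).symm⟩
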